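/- Let A ∈ ℝ^{m×d}, Y ∈ ℝ^{m×n}, λ > 0, 1 ≤ q < 2, and 0 < p < 2. Let X_k ∈ ℝ^{d×n} be such that every row of X_k and every row of AX_k − Y is nonzero. Define the diagonal matrices G_k with (G_k)_{ii} = 1/‖(AX_k − Y)^i‖₂^{2−q} and H_k with (H_k)_{ii} = 1/‖X_k^i‖₂^{2−p}, the function Q_k(X) = Tr((AX − Y)ᵀG_k(AX − Y)) + λ·(p/q)·Tr(XᵀH_kX), and J(X) = Σ_{i=1}^m ‖(AX − Y)^i‖₂^q + λ·Σ_{i=1}^d ‖X^i‖₂^p. If X_{k+1} satisfies Q_k(X_{k+1}) ≤ Q_k(X_k) and additionally J(X_{k+1}) = J(X_k), then ‖(AX_{k+1} − Y)^i‖₂ = ‖(AX_k − Y)^i‖₂ for every i = 1, …, m and ‖X_{k+1}^i‖₂ = ‖X_k^i‖₂ for every i = 1, …, d. -/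

import Mathlib

open Matrix

/-- Euclidean norm of the i-th row of a matrix. -/
noncomputable def rowNorm {m n : ℕ} (M : Matrix (Fin m) (Fin n) ℝ) (i : Fin m) : ℝ :=
  Real.sqrt (∑ j, M i j ^ 2)

lemma rowNorm_nonneg {m n : ℕ} (M : Matrix (Fin m) (Fin n) ℝ) (i : Fin m) : 0 ≤ rowNorm M i :=
  Real.sqrt_nonneg _

lemma rowNorm_sq {m n : ℕ} (M : Matrix (Fin m) (Fin n) ℝ) (i : Fin m) :
    rowNorm M i ^ (2:ℝ) = ∑ j, M i j ^ 2 := by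
  rw [show ((2:ℝ)) = ((2:ℕ):ℝ) by norm_num, Real.rpow_natCast, rowNorm,
    Real.sq_sqrt (Finset.sum_nonneg fun j _ => sq_nonneg _)]

lemma rowNorm_pos {m n : ℕ} (M : Matrix (Fin m) (Fin n) ℝ) (i : Fin m) (h : M i ≠ 0) :
    0 < rowNorm M i := by
  apply Real.sqrt_pos.2
  obtain ⟨j, hj⟩ := Function.ne_iff.1 h
  exact Finset.sum_pos' (fun j _ => sq_nonneg _) ⟨j, Finset.mem_univ _, by simpa using sq_pos_of_ne_zero hj⟩

lemma trace_diag {m n : ℕ} (w : Fin m → ℝ) (M : Matrix (Fin m) (Fin n) ℝ) :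
    Matrix.trace (Mᵀ * Matrix.diagonal w * M) = ∑ i, w i * ∑ j, M i j ^ 2 := by
  rw [Matrix.mul_assoc, Matrix.trace]
  simp only [Matrix.diag_apply, Matrix.mul_apply, Matrix.diagonal_mul, Matrix.transpose_apply]
  rw [Finset.sum_comm]
  exact Finset.sum_congr rfl fun i _ => by
    rw [Finset.mul_sum]; exact Finset.sum_congr rfl fun j _ => by
      simp [Matrix.diagonal_apply, ite_mul, Finset.sum_ite_eq]; ring

lemma bern_le {x α : ℝ} (hx : 0 ≤ x) (hα0 : 0 < α) (hα1 : α < 1) :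
    x ^ α ≤ α * x + (1 - α) := by
  have h := rpow_one_add_le_one_add_mul_self (s := x - 1) (by linarith) hα0.le hα1.le
  have hx' : 1 + (x - 1) = x := by ring
  rw [hx'] at h
  linarith

lemma bern_lt {x α : ℝ} (hx : 0 ≤ x) (hx1 : x ≠ 1) (hα0 : 0 < α) (hα1 : α < 1) :
    x ^ α < α * x + (1 - α) := by
  have h := rpow_one_add_lt_one_add_mul_self (s := x - 1) (by linarith)
    (by intro h; apply hx1; linarith) hα0 hα1
  have hx' : 1 + (x - 1) = x := by ring
  rw [hx'] at h
  linarith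

lemma deficit_t {t q : ℝ} (ht : 0 ≤ t) (hq0 : 0 < q) (hq2 : q < 2) :
    t ^ q ≤ q/2 * t ^ (2:ℝ) + (1 - q/2) ∧
    (t ^ q = q/2 * t ^ (2:ℝ) + (1 - q/2) → t = 1) := by
  have hα0 : 0 < q/2 := by linarith
  have hα1 : q/2 < 1 := by linarith
  have hx : 0 ≤ t ^ (2:ℝ) := Real.rpow_nonneg ht 2
  have key : (t ^ (2:ℝ)) ^ (q/2) = t ^ q := by
    rw [← Real.rpow_mul ht]
    congr 1
    ring
  constructor
  · have := bern_le hx hα0 hα1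
    rw [key] at this
    linarith
  · intro h
    by_contra ht1
    have htne : t ^ (2:ℝ) ≠ 1 := by
      intro h2
      apply ht1
      rw [show (2:ℝ) = ((2:ℕ):ℝ) by norm_num, Real.rpow_natCast] at h2
      have h3 : (t - 1) * (t + 1) = 0 := by nlinarith
      rcases mul_eq_zero.1 h3 with h4 | h4
      · linarith
      · linarith
    have := bern_lt hx htne hα0 hα1
    rw [key] at this
    linarith

lemma deficit {r s q : ℝ} (hr : 0 < r) (hs : 0 ≤ s) (hq0 : 0 < q) (hq2 : q < 2) :
    0 ≤ q/2 * (1 / r ^ (2-q) * s ^ (2:ℝ)) + (1 - q/2) * r ^ q - s ^ q ∧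
    (q/2 * (1 / r ^ (2-q) * s ^ (2:ℝ)) + (1 - q/2) * r ^ q - s ^ q = 0 → s = r) := by
  have ht : 0 ≤ s / r := div_nonneg hs hr.le
  have hs_eq : s = (s / r) * r := by field_simp
  have hrq : 0 < r ^ q := Real.rpow_pos_of_pos hr q
  have hr2q : 0 < r ^ (2-q) := Real.rpow_pos_of_pos hr (2-q)
  have hr2 : r ^ (2:ℝ) = r ^ (2-q) * r ^ q := by
    rw [← Real.rpow_add hr]; norm_num
  have key1 : 1 / r ^ (2-q) * s ^ (2:ℝ) = (s / r) ^ (2:ℝ) * r ^ q := by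
    conv_lhs => rw [hs_eq]
    rw [Real.mul_rpow ht hr.le, hr2]
    field_simp
  have key2 : s ^ q = (s / r) ^ q * r ^ q := by
    conv_lhs => rw [hs_eq]
    rw [Real.mul_rpow ht hr.le]
  obtain ⟨hle, heq⟩ := deficit_t ht hq0 hq2
  constructor
  · rw [key1, key2]
    nlinarith
  · intro h0
    rw [key1, key2] at h0
    have hinner : (s / r) ^ q = q/2 * (s / r) ^ (2:ℝ) + (1 - q/2) := by
      have : r ^ q * (q/2 * (s/r) ^ (2:ℝ) + (1 - q/2) - (s/r) ^ q) = 0 := by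
        linarith [h0]
      rcases mul_eq_zero.1 this with h | h
      · exact absurd h hrq.ne'
      · linarith
    have := heq hinner
    rw [hs_eq, this, one_mul]

/-- If Q_k(X_{k+1}) ≤ Q_k(X_k) and moreover J(X_{k+1}) = J(X_k), then all row norms of
AX − Y and of X are preserved from step k to step k+1. -/
theorem stmt_15 {m d n : ℕ} (A : Matrix (Fin m) (Fin d) ℝ) (Y : Matrix (Fin m) (Fin n) ℝ)
    (lam q p : ℝ) (hlam : 0 < lam) (hq1 : 1 ≤ q) (hq2 : q < 2) (hp0 : 0 < p) (hp2 : p < 2)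
    (Xk Xk1 : Matrix (Fin d) (Fin n) ℝ)
    (hrowX : ∀ i, Xk i ≠ 0) (hrowR : ∀ i, (A * Xk - Y) i ≠ 0) :
    let Gk : Matrix (Fin m) (Fin m) ℝ :=
      Matrix.diagonal (fun i => 1 / rowNorm (A * Xk - Y) i ^ (2 - q))
    let Hk : Matrix (Fin d) (Fin d) ℝ :=
      Matrix.diagonal (fun i => 1 / rowNorm Xk i ^ (2 - p))
    let Qk : Matrix (Fin d) (Fin n) ℝ → ℝ := fun X =>
      Matrix.trace ((A * X - Y)ᵀ * Gk * (A * X - Y)) + lam * (p / q) * Matrix.trace (Xᵀ * Hk * X)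
    let J : Matrix (Fin d) (Fin n) ℝ → ℝ := fun X =>
      ∑ i, rowNorm (A * X - Y) i ^ q + lam * ∑ i, rowNorm X i ^ p
    Qk Xk1 ≤ Qk Xk → J Xk1 = J Xk →
      (∀ i, rowNorm (A * Xk1 - Y) i = rowNorm (A * Xk - Y) i) ∧
      (∀ i, rowNorm Xk1 i = rowNorm Xk i) := by
  intro Gk Hk Qk J hQ hJ
  have hq0 : 0 < q := lt_of_lt_of_le one_pos hq1
  have hQb : Matrix.trace ((A * Xk1 - Y)ᵀ
        * Matrix.diagonal (fun i => 1 / rowNorm (A * Xk - Y) i ^ (2 - q)) * (A * Xk1 - Y))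
      + lam * (p / q) * Matrix.trace (Xk1ᵀ
        * Matrix.diagonal (fun i => 1 / rowNorm Xk i ^ (2 - p)) * Xk1)
      ≤ Matrix.trace ((A * Xk - Y)ᵀ
        * Matrix.diagonal (fun i => 1 / rowNorm (A * Xk - Y) i ^ (2 - q)) * (A * Xk - Y))
      + lam * (p / q) * Matrix.trace (Xkᵀ
        * Matrix.diagonal (fun i => 1 / rowNorm Xk i ^ (2 - p)) * Xk) := hQ
  have hJ' : ∑ i, rowNorm (A * Xk1 - Y) i ^ q + lam * ∑ i, rowNorm Xk1 i ^ p
      = ∑ i, rowNorm (A * Xk - Y) i ^ q + lam * ∑ i, rowNorm Xk i ^ p := hJ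
  clear hQ hJ
  set R := A * Xk - Y with hR
  set S := A * Xk1 - Y with hS
  have hrpos : ∀ i, 0 < rowNorm R i := fun i => rowNorm_pos _ _ (hrowR i)
  have hupos : ∀ i, 0 < rowNorm Xk i := fun i => rowNorm_pos _ _ (hrowX i)
  have htr : ∀ (k : ℕ) (w : Fin k → ℝ) (M : Matrix (Fin k) (Fin n) ℝ),
      Matrix.trace (Mᵀ * Matrix.diagonal w * M) = ∑ i, w i * rowNorm M i ^ (2:ℝ) := by
    intro k w M
    rw [trace_diag]
    exact Finset.sum_congr rfl fun i _ => by rw [rowNorm_sq]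
  rw [htr m _ S, htr d _ Xk1, htr m _ R, htr d _ Xk] at hQb
  have hsimp : ∀ (r x : ℝ), 0 < r → 1 / r ^ ((2:ℝ)-x) * r ^ (2:ℝ) = r ^ x := by
    intro r x hr
    rw [show r ^ (2:ℝ) = r ^ ((2-x) + x) by norm_num, Real.rpow_add hr]
    field_simp
  have hQ'' : ∑ i, (1 / rowNorm R i ^ (2-q)) * rowNorm S i ^ (2:ℝ)
        + lam * (p / q) * ∑ i, (1 / rowNorm Xk i ^ (2-p)) * rowNorm Xk1 i ^ (2:ℝ)
      ≤ ∑ i, rowNorm R i ^ q + lam * (p / q) * ∑ i, rowNorm Xk i ^ p := by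
    refine hQb.trans (le_of_eq ?_)
    congr 1
    · exact Finset.sum_congr rfl fun i _ => hsimp _ _ (hrpos i)
    · congr 1
      exact Finset.sum_congr rfl fun i _ => hsimp _ _ (hupos i)
  clear hQb
  -- deficits
  set D : Fin m → ℝ := fun i =>
    q/2 * (1 / rowNorm R i ^ (2-q) * rowNorm S i ^ (2:ℝ))
      + (1 - q/2) * rowNorm R i ^ q - rowNorm S i ^ q with hD_def
  set E : Fin d → ℝ := fun i =>
    p/2 * (1 / rowNorm Xk i ^ (2-p) * rowNorm Xk1 i ^ (2:ℝ))
      + (1 - p/2) * rowNorm Xk i ^ p - rowNorm Xk1 i ^ p with hE_def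
  have hD0 : ∀ i, 0 ≤ D i := fun i =>
    (deficit (hrpos i) (rowNorm_nonneg S i) hq0 hq2).1
  have hE0 : ∀ i, 0 ≤ E i := fun i =>
    (deficit (hupos i) (rowNorm_nonneg Xk1 i) hp0 hp2).1
  have hsumD : ∑ i, D i = q/2 * ∑ i, (1 / rowNorm R i ^ (2-q)) * rowNorm S i ^ (2:ℝ)
      + (1 - q/2) * ∑ i, rowNorm R i ^ q - ∑ i, rowNorm S i ^ q := by
    simp only [hD_def, Finset.sum_sub_distrib, Finset.sum_add_distrib, Finset.mul_sum]
  have hsumE : ∑ i, E i = p/2 * ∑ i, (1 / rowNorm Xk i ^ (2-p)) * rowNorm Xk1 i ^ (2:ℝ)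
      + (1 - p/2) * ∑ i, rowNorm Xk i ^ p - ∑ i, rowNorm Xk1 i ^ p := by
    simp only [hE_def, Finset.sum_sub_distrib, Finset.sum_add_distrib, Finset.mul_sum]
  have key := mul_le_mul_of_nonneg_left hQ'' (by linarith : (0:ℝ) ≤ q/2)
  have hb : lam * (p/2) * (∑ i, (1 / rowNorm Xk i ^ (2-p)) * rowNorm Xk1 i ^ (2:ℝ))
      = q/2 * (lam * (p/q) * ∑ i, (1 / rowNorm Xk i ^ (2-p)) * rowNorm Xk1 i ^ (2:ℝ)) := by
    field_simp
  have he : lam * (p/2) * (∑ i, rowNorm Xk i ^ p)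
      = q/2 * (lam * (p/q) * ∑ i, rowNorm Xk i ^ p) := by
    field_simp
  have hsum : ∑ i, D i + lam * ∑ i, E i ≤ 0 := by
    rw [hsumD, hsumE]
    have hexp : lam * (p/2 * ∑ i, (1 / rowNorm Xk i ^ (2-p)) * rowNorm Xk1 i ^ (2:ℝ)
        + (1 - p/2) * ∑ i, rowNorm Xk i ^ p - ∑ i, rowNorm Xk1 i ^ p)
        = lam * (p/2) * (∑ i, (1 / rowNorm Xk i ^ (2-p)) * rowNorm Xk1 i ^ (2:ℝ))
          + lam * ∑ i, rowNorm Xk i ^ p - lam * (p/2) * (∑ i, rowNorm Xk i ^ p)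
          - lam * ∑ i, rowNorm Xk1 i ^ p := by ring
    rw [hexp, hb, he]
    have hexp2 : q/2 * (∑ i, (1 / rowNorm R i ^ (2-q)) * rowNorm S i ^ (2:ℝ)
        + lam * (p/q) * ∑ i, (1 / rowNorm Xk i ^ (2-p)) * rowNorm Xk1 i ^ (2:ℝ))
        = q/2 * ∑ i, (1 / rowNorm R i ^ (2-q)) * rowNorm S i ^ (2:ℝ)
          + q/2 * (lam * (p/q) * ∑ i, (1 / rowNorm Xk i ^ (2-p)) * rowNorm Xk1 i ^ (2:ℝ)) := by
      ring
    have hexp3 : q/2 * (∑ i, rowNorm R i ^ q + lam * (p/q) * ∑ i, rowNorm Xk i ^ p)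
        = q/2 * ∑ i, rowNorm R i ^ q + q/2 * (lam * (p/q) * ∑ i, rowNorm Xk i ^ p) := by
      ring
    rw [hexp2, hexp3] at key
    linarith [key, hJ']
  have h1 : 0 ≤ ∑ i, D i := Finset.sum_nonneg fun i _ => hD0 i
  have h2 : 0 ≤ ∑ i, E i := Finset.sum_nonneg fun i _ => hE0 i
  have h3 : 0 ≤ lam * ∑ i, E i := mul_nonneg hlam.le h2
  have hDz : ∑ i, D i = 0 := le_antisymm (by linarith) h1
  have hEz : ∑ i, E i = 0 := by
    have h4 : lam * ∑ i, E i ≤ lam * 0 := by rw [mul_zero]; linarith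
    exact le_antisymm (le_of_mul_le_mul_left h4 hlam) h2
  constructor
  · intro i
    have hDi : D i = 0 :=
      (Finset.sum_eq_zero_iff_of_nonneg (fun i _ => hD0 i)).1 hDz i (Finset.mem_univ i)
    exact (deficit (hrpos i) (rowNorm_nonneg S i) hq0 hq2).2 hDi
  · intro i
    have hEi : E i = 0 :=
      (Finset.sum_eq_zero_iff_of_nonneg (fun i _ => hE0 i)).1 hEz i (Finset.mem_univ i)
    exact (deficit (hupos i) (rowNorm_nonneg Xk1 i) hp0 hp2).2 hEi
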